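/- There is no simple graph on 5 vertices with 8 edges in which every vertex has degree at least 3 and which is not a zero graph; equivalently, every simple graph on 5 vertices, 8 edges with minimum degree ≥ 3 admits an automorphism inducing an odd permutation of its edge set. -/

import Mathlib

open SimpleGraph

/-- The sign of the permutation induced on the edge set of `G` by an automorphism `σ`. -/
noncomputable def edgeSign {V : Type*} [Fintype V] [DecidableEq V]
    (G : SimpleGraph V) (σ : G ≃g G) : ℤˣ := by
  classical
  exact Equiv.Perm.sign (σ.mapEdgeSet : Equiv.Perm G.edgeSet)

/-- A *zero graph*: some automorphism induces an odd permutation of the edge set. -/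
def IsZeroGraph {V : Type*} [Fintype V] [DecidableEq V] (G : SimpleGraph V) : Prop :=
  ∃ σ : G ≃g G, edgeSign G σ = -1

-- the concrete model: K5 minus the two disjoint edges 01 and 23
def Hgraph : SimpleGraph (Fin 5) where
  Adj x y := x ≠ y ∧ ¬(x = 0 ∧ y = 1) ∧ ¬(x = 1 ∧ y = 0) ∧ ¬(x = 2 ∧ y = 3) ∧ ¬(x = 3 ∧ y = 2)
  symm := ⟨fun x y h => by revert h; revert x y; decide⟩
  loopless := ⟨fun x h => by revert h; revert x; decide⟩

instance : DecidableRel Hgraph.Adj := fun x y => by unfold Hgraph; simp only; infer_instance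

def σH : Hgraph ≃g Hgraph where
  toEquiv := Equiv.swap 0 1
  map_rel_iff' := by intro a b; revert a b; decide

lemma sign_σH : Equiv.Perm.sign (σH.mapEdgeSet : Equiv.Perm Hgraph.edgeSet) = -1 := by decide

lemma sign_congr {α : Type*} (d1 d2 : DecidableEq α) (i1 i2 : Fintype α)
    (p : Equiv.Perm α) :
    @Equiv.Perm.sign α d1 i1 p = @Equiv.Perm.sign α d2 i2 p := by
  have hd : d1 = d2 := by funext a b; exact Subsingleton.elim _ _
  cases hd
  cases Subsingleton.elim i1 i2
  rfl

lemma edgeSign_eq {V : Type*} [Fintype V] [DecidableEq V] (G : SimpleGraph V) (σ : G ≃g G)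
    [Fintype G.edgeSet] :
    edgeSign G σ = Equiv.Perm.sign (σ.mapEdgeSet : Equiv.Perm G.edgeSet) := by
  unfold edgeSign
  exact sign_congr _ _ _ _ _

lemma isZeroGraph_of_iso {V : Type*} [Fintype V] [DecidableEq V]
    {G H : SimpleGraph V} (e : H ≃g G) (h : IsZeroGraph H) : IsZeroGraph G := by
  classical
  obtain ⟨σ, hσ⟩ := h
  refine ⟨(e.symm.trans σ).trans e, ?_⟩
  rw [edgeSign_eq] at hσ ⊢
  rw [← hσ]
  refine Equiv.Perm.sign_eq_sign_of_equiv _ _ e.mapEdgeSet.symm ?_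
  intro x
  apply Subtype.ext
  simp [Iso.mapEdgeSet, Hom.mapEdgeSet, Sym2.map_map, Function.comp_def]

lemma zero_H : IsZeroGraph Hgraph := ⟨σH, by rw [edgeSign_eq]; exact sign_σH⟩

/-- Every simple graph on `5` vertices with `8` edges and minimum degree `≥ 3`
is a zero graph: it has an automorphism inducing an odd permutation of its edges. -/
theorem five_vertices_eight_edges_isZeroGraph
    (G : SimpleGraph (Fin 5)) [DecidableRel G.Adj]
    (hE : G.edgeFinset.card = 8) (hdeg : ∀ v, 3 ≤ G.degree v) :
    IsZeroGraph G := by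
  classical
  -- complement degrees
  have hdc : ∀ v, Gᶜ.degree v + G.degree v = 4 := by
    intro v
    have h1 : Gᶜ.degree v = Fintype.card (Fin 5) - 1 - G.degree v := G.degree_compl v
    have h2 : G.degree v < Fintype.card (Fin 5) := G.degree_lt_card_verts v
    simp only [Fintype.card_fin] at h1 h2
    omega
  have hdsum : ∑ v, G.degree v = 16 := by
    rw [SimpleGraph.sum_degrees_eq_twice_card_edges, hE]
  have hcsum : ∑ v, Gᶜ.degree v = 4 := by
    have := Finset.sum_add_distrib (s := (Finset.univ : Finset (Fin 5)))
      (f := fun v => Gᶜ.degree v) (g := fun v => G.degree v)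
    have h20 : ∑ v : Fin 5, (Gᶜ.degree v + G.degree v) = 20 := by
      simp [hdc]
    omega
  have hcard2 : Gᶜ.edgeFinset.card = 2 := by
    have := Gᶜ.sum_degrees_eq_twice_card_edges
    omega
  have hdegc : ∀ v, Gᶜ.degree v ≤ 1 := fun v => by have := hdc v; have := hdeg v; omega
  -- unique neighbor in complement
  have huniq : ∀ v x y, Gᶜ.Adj v x → Gᶜ.Adj v y → x = y := by
    intro v x y hx hy
    have hc : (Gᶜ.neighborFinset v).card ≤ 1 := hdegc v
    exact Finset.card_le_one.mp hc x (by simpa using hx) y (by simpa using hy)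
  -- extract the two complement edges
  obtain ⟨x, y, hxy, hset⟩ := Finset.card_eq_two.mp hcard2
  obtain ⟨a, b, rfl⟩ : ∃ a b, x = s(a, b) := Sym2.ind (fun a b => ⟨a, b, rfl⟩) x
  obtain ⟨c, d, rfl⟩ : ∃ c d, y = s(c, d) := Sym2.ind (fun c d => ⟨c, d, rfl⟩) y
  have hab : Gᶜ.Adj a b := by
    rw [← SimpleGraph.mem_edgeSet, ← SimpleGraph.mem_edgeFinset, hset]; simp
  have hcd : Gᶜ.Adj c d := by
    rw [← SimpleGraph.mem_edgeSet, ← SimpleGraph.mem_edgeFinset, hset]; simp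
  -- the four vertices are pairwise distinct
  have hab' : a ≠ b := hab.ne
  have hcd' : c ≠ d := hcd.ne
  have hxy' : ¬((a = c ∧ b = d) ∨ (a = d ∧ b = c)) := by
    intro h; exact hxy (Sym2.eq_iff.mpr h)
  have hac : a ≠ c := by
    intro h
    have h2 : Gᶜ.Adj a d := by rw [h]; exact hcd
    exact hxy' (Or.inl ⟨h, huniq a b d hab h2⟩)
  have had : a ≠ d := by
    intro h
    have h2 : Gᶜ.Adj a c := by rw [h]; exact hcd.symm
    exact hxy' (Or.inr ⟨h, huniq a b c hab h2⟩)
  have hbc : b ≠ c := by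
    intro h
    have h2 : Gᶜ.Adj b d := by rw [h]; exact hcd
    exact hxy' (Or.inr ⟨huniq b a d hab.symm h2, h⟩)
  have hbd : b ≠ d := by
    intro h
    have h2 : Gᶜ.Adj b c := by rw [h]; exact hcd.symm
    exact hxy' (Or.inl ⟨huniq b a c hab.symm h2, h⟩)
  -- the fifth vertex
  have hss : ({a, b, c, d} : Finset (Fin 5)) ⊂ Finset.univ := by
    refine Finset.ssubset_univ_iff.mpr ?_
    intro h
    have : ({a, b, c, d} : Finset (Fin 5)).card = 5 := by rw [h]; simp
    have : ({a, b, c, d} : Finset (Fin 5)).card ≤ 4 := by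
      apply le_trans (Finset.card_insert_le _ _)
      apply Nat.succ_le_succ
      apply le_trans (Finset.card_insert_le _ _)
      apply Nat.succ_le_succ
      exact le_trans (Finset.card_insert_le _ _) (by simp)
    omega
  obtain ⟨v, -, hv⟩ := Finset.exists_of_ssubset hss
  simp only [Finset.mem_insert, Finset.mem_singleton, not_or] at hv
  obtain ⟨hva, hvb, hvc, hvd⟩ := hv
  -- adjacency characterization
  have hchar : ∀ u w, G.Adj u w ↔ u ≠ w ∧ s(u, w) ≠ s(a, b) ∧ s(u, w) ≠ s(c, d) := by
    intro u w
    constructor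
    · intro h
      refine ⟨h.ne, ?_, ?_⟩
      · intro hcontra
        have : Gᶜ.Adj u w := by rw [← SimpleGraph.mem_edgeSet, hcontra]; exact hab
        exact this.2 h
      · intro hcontra
        have : Gᶜ.Adj u w := by rw [← SimpleGraph.mem_edgeSet, hcontra]; exact hcd
        exact this.2 h
    · rintro ⟨hne, h1, h2⟩
      by_contra h
      have : Gᶜ.Adj u w := ⟨hne, h⟩
      have : s(u, w) ∈ Gᶜ.edgeFinset := by
        rw [SimpleGraph.mem_edgeFinset]; exact this
      rw [hset] at this
      simp only [Finset.mem_insert, Finset.mem_singleton] at this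
      tauto
  -- build the isomorphism from Hgraph
  have hinj : Function.Injective ![a, b, c, d, v] := by
    intro i j hij
    fin_cases i <;> fin_cases j <;>
      first
        | rfl
        | (exfalso; revert hij;
           simp only [Matrix.cons_val_zero, Matrix.cons_val_one, Matrix.head_cons,
             Matrix.cons_val_succ, Matrix.cons_val_fin_one];
           intro hij; first
             | exact hab' hij | exact hab' hij.symm
             | exact hac hij | exact hac hij.symm
             | exact had hij | exact had hij.symm
             | exact hbc hij | exact hbc hij.symm
             | exact hbd hij | exact hbd hij.symm
             | exact hcd' hij | exact hcd' hij.symm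
             | exact hva hij.symm | exact hva hij
             | exact hvb hij.symm | exact hvb hij
             | exact hvc hij.symm | exact hvc hij
             | exact hvd hij.symm | exact hvd hij)
  have hbij : Function.Bijective ![a, b, c, d, v] := Finite.injective_iff_bijective.mp hinj
  let ρ : Fin 5 ≃ Fin 5 := Equiv.ofBijective _ hbij
  have hρ0 : ρ 0 = a := rfl
  have hρ1 : ρ 1 = b := rfl
  have hρ2 : ρ 2 = c := rfl
  have hρ3 : ρ 3 = d := rfl
  have hHchar : ∀ u w : Fin 5, Hgraph.Adj u w ↔
      u ≠ w ∧ s(u, w) ≠ s(0, 1) ∧ s(u, w) ≠ s(2, 3) := by decide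
  have key : ∀ u w : Fin 5, G.Adj (ρ u) (ρ w) ↔ Hgraph.Adj u w := by
    intro u w
    rw [hchar, hHchar]
    have e1 : s(a, b) = Sym2.map ρ s(0, 1) := by rw [Sym2.map_pair_eq, hρ0, hρ1]
    have e2 : s(c, d) = Sym2.map ρ s(2, 3) := by rw [Sym2.map_pair_eq, hρ2, hρ3]
    have e3 : s(ρ u, ρ w) = Sym2.map ρ s(u, w) := by rw [Sym2.map_pair_eq]
    rw [e1, e2, e3]
    have hmi := Sym2.map.injective ρ.injective
    constructor
    · rintro ⟨h1, h2, h3⟩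
      exact ⟨fun hc => h1 (by rw [hc]), fun hc => h2 (by rw [hc]),
        fun hc => h3 (by rw [hc])⟩
    · rintro ⟨h1, h2, h3⟩
      exact ⟨fun hc => h1 (ρ.injective hc), fun hc => h2 (hmi hc), fun hc => h3 (hmi hc)⟩
  exact isZeroGraph_of_iso ⟨ρ, key _ _⟩ zero_H
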